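/- Let {x^t} be generated by pDCAe for a level-bounded objective F = f + P₁ - P₂ with extrapolation parameters β_t ∈ [0,1) and sup_t β_t < 1. Then the sequence {x^t} is bounded. -/

import Mathlib

set_option maxHeartbeats 1000000


open scoped RealInnerProductSpace

section Helpers

variable {E : Type*} [NormedAddCommGroup E] [InnerProductSpace ℝ E] [CompleteSpace E]

lemma line_hasDerivAt (f : E → ℝ) (f' : E → E) (hdiff : ∀ x, HasGradientAt f (f' x) x)
    (a v : E) (t : ℝ) :
    HasDerivAt (fun s : ℝ => f (a + s • v)) ⟪f' (a + t • v), v⟫ t := by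
  have hc : HasDerivAt (fun s : ℝ => a + s • v) v t := by
    simpa using ((hasDerivAt_id t).smul_const v).const_add a
  have hf := (hasGradientAt_iff_hasFDerivAt.mp (hdiff (a + t • v)))
  have := hf.comp_hasDerivAt t hc
  exact this

lemma descent_lemma (L : ℝ) (hL : 0 < L) (f : E → ℝ) (f' : E → E)
    (hdiff : ∀ x, HasGradientAt f (f' x) x) (hlip : LipschitzWith L.toNNReal f')
    (a b : E) : f b ≤ f a + ⟪f' a, b - a⟫ + L / 2 * ‖b - a‖ ^ 2 := by
  set v := b - a with hv
  set φ : ℝ → ℝ := fun t => f (a + t • v) - t * ⟪f' a, v⟫ - L / 2 * t ^ 2 * ‖v‖ ^ 2 with hφ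
  have hd : ∀ t : ℝ, HasDerivAt φ (⟪f' (a + t • v), v⟫ - ⟪f' a, v⟫ - L * t * ‖v‖ ^ 2) t := by
    intro t
    have h1 := line_hasDerivAt f f' hdiff a v t
    have h2 : HasDerivAt (fun t : ℝ => t * ⟪f' a, v⟫) ⟪f' a, v⟫ t := by
      simpa using (hasDerivAt_id t).mul_const (⟪f' a, v⟫)
    have h3 : HasDerivAt (fun t : ℝ => L / 2 * t ^ 2 * ‖v‖ ^ 2) (L * t * ‖v‖ ^ 2) t := by
      have := ((hasDerivAt_pow 2 t).const_mul (L / 2)).mul_const (‖v‖ ^ 2)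
      refine this.congr_deriv ?_
      ring
    exact (h1.sub h2).sub h3
  have key : AntitoneOn φ (Set.Icc (0 : ℝ) 1) := by
    apply antitoneOn_of_deriv_nonpos (convex_Icc 0 1)
    · exact Continuous.continuousOn (by
        rw [continuous_iff_continuousAt]; exact fun t => (hd t).continuousAt)
    · exact fun t _ => (hd t).differentiableAt.differentiableWithinAt
    · intro t ht
      rw [interior_Icc] at ht
      rw [(hd t).deriv]
      have hlipb : ‖f' (a + t • v) - f' a‖ ≤ L * (t * ‖v‖) := by
        have := hlip.dist_le_mul (a + t • v) a
        rw [dist_eq_norm, dist_eq_norm] at this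
        calc ‖f' (a + t • v) - f' a‖ ≤ L.toNNReal * ‖a + t • v - a‖ := this
          _ = L * (t * ‖v‖) := by
              rw [Real.coe_toNNReal _ hL.le]
              congr 1
              rw [add_sub_cancel_left, norm_smul, Real.norm_eq_abs,
                abs_of_pos ht.1]
      have hinner : ⟪f' (a + t • v) - f' a, v⟫ ≤ ‖f' (a + t • v) - f' a‖ * ‖v‖ :=
        real_inner_le_norm _ _
      rw [inner_sub_left] at hinner
      nlinarith [norm_nonneg v, hinner, hlipb]
  have h01 := key (Set.mem_Icc.mpr ⟨le_refl 0, zero_le_one⟩)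
    (Set.mem_Icc.mpr ⟨zero_le_one, le_refl 1⟩) zero_le_one
  have e0 : φ 0 = f a := by simp [hφ]
  have hab : a + v = b := by rw [hv]; abel
  have e1 : φ 1 = f b - ⟪f' a, v⟫ - L / 2 * ‖v‖ ^ 2 := by simp [hφ, hab]
  rw [e0, e1] at h01
  linarith

lemma grad_convex_le (f : E → ℝ) (f' : E → E) (hconv : ConvexOn ℝ Set.univ f)
    (hdiff : ∀ x, HasGradientAt f (f' x) x) (a b : E) :
    f a + ⟪f' a, b - a⟫ ≤ f b := by
  set v := b - a with hv
  have hg : ConvexOn ℝ Set.univ (fun t : ℝ => f (a + t • v)) := by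
    have h := hconv.comp_affineMap (AffineMap.lineMap a b)
    have he : (f ∘ (AffineMap.lineMap a b) : ℝ → ℝ) = fun t : ℝ => f (a + t • v) := by
      funext t
      simp [AffineMap.lineMap_apply, hv]
      rw [add_comm]
    rw [he] at h
    simpa using h
  have hd0 : HasDerivAt (fun t : ℝ => f (a + t • v)) ⟪f' a, v⟫ 0 := by
    have := line_hasDerivAt f f' hdiff a v 0
    simpa using this
  have := hg.le_slope_of_hasDerivAt (Set.mem_univ (0:ℝ)) (Set.mem_univ (1:ℝ)) zero_lt_one hd0
  rw [slope_def_field] at this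
  have e1 : a + (1:ℝ) • v = b := by rw [one_smul, hv]; abel
  have e0 : a + (0:ℝ) • v = a := by simp
  simp only [e1, e0] at this
  simp at this
  linarith

lemma comb_norm_sq (u w : E) (l : ℝ) :
    ‖(1 - l) • u + l • w‖ ^ 2
      = (1 - l) * ‖u‖ ^ 2 + l * ‖w‖ ^ 2 - l * (1 - l) * ‖u - w‖ ^ 2 := by
  have e : ∀ z : E, ‖z‖ ^ 2 = ⟪z, z⟫ := fun z => (real_inner_self_eq_norm_sq z).symm
  rw [e, e, e, e]
  simp only [inner_add_left, inner_add_right, inner_sub_left, inner_sub_right,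
    real_inner_smul_left, real_inner_smul_right]
  rw [real_inner_comm u w]
  ring

end Helpers

/-- pDCAe with level-bounded objective: the iterate sequence is bounded.
Here `x 0` plays the role of `x⁻¹` and `x (t+1)` of `x^t`. -/
theorem stmt4 {n : ℕ} (L : ℝ) (hL : 0 < L)
    (f : EuclideanSpace ℝ (Fin n) → ℝ)
    (f' : EuclideanSpace ℝ (Fin n) → EuclideanSpace ℝ (Fin n))
    (hconv : ConvexOn ℝ Set.univ f)
    (hdiff : ∀ x, HasGradientAt f (f' x) x)
    (hlip : LipschitzWith L.toNNReal f')
    (P₁ P₂ : EuclideanSpace ℝ (Fin n) → ℝ)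
    (hP₁conv : ConvexOn ℝ Set.univ P₁) (hP₁lsc : LowerSemicontinuous P₁)
    (hP₂conv : ConvexOn ℝ Set.univ P₂) (hP₂cont : Continuous P₂)
    (hlevel : ∀ r : ℝ, Bornology.IsBounded {z | f z + P₁ z - P₂ z ≤ r})
    (x y ξ : ℕ → EuclideanSpace ℝ (Fin n)) (β : ℕ → ℝ)
    (hβ : ∀ t, β t ∈ Set.Ico (0 : ℝ) 1)
    (hsup : ∃ c < (1 : ℝ), ∀ t, β t ≤ c)
    (hinit : x 0 = x 1)
    (hξ : ∀ t z, P₂ (x (t+1)) + ⟪ξ t, z - x (t+1)⟫ ≤ P₂ z)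
    (hy : ∀ t, y t = x (t+1) + β t • (x (t+1) - x t))
    (hmin : ∀ t z, ⟪f' (y t) - ξ t, x (t+2)⟫ + L / 2 * ‖x (t+2) - y t‖ ^ 2 + P₁ (x (t+2)) ≤
      ⟪f' (y t) - ξ t, z⟫ + L / 2 * ‖z - y t‖ ^ 2 + P₁ z) :
    Bornology.IsBounded (Set.range x) := by
  obtain ⟨c, hc1, hcβ⟩ := hsup
  have hc0 : 0 ≤ c := le_trans (hβ 0).1 (hcβ 0)
  set lam : ℝ := 1 - c ^ 2 with hlam
  clear_value lam
  have hlam_pos : 0 < lam := by nlinarith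
  have hlam_le : lam ≤ 1 := by nlinarith
  -- key one-step inequality
  have key : ∀ t, f (x (t+2)) + P₁ (x (t+2)) - P₂ (x (t+2))
      + L * c ^ 2 / 2 * ‖x (t+2) - x (t+1)‖ ^ 2
      ≤ f (x (t+1)) + P₁ (x (t+1)) - P₂ (x (t+1))
      + L * c ^ 2 / 2 * ‖x (t+1) - x t‖ ^ 2 := by
    intro t
    set a := x (t+1) with ha
    set b := x (t+2) with hb
    set w := y t with hw
    set g := f' w - ξ t with hg
    clear_value g w b a
    -- strong convexity of the subproblem, applied at z = a
    have hsm : ⟪g, b⟫ + L / 2 * ‖b - w‖ ^ 2 + P₁ b + L / 2 * c ^ 2 * ‖b - a‖ ^ 2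
        ≤ ⟪g, a⟫ + L / 2 * ‖a - w‖ ^ 2 + P₁ a := by
      have h := hmin t ((1 - lam) • b + lam • a)
      rw [← hb, ← hw, ← hg] at h
      have hlin : ⟪g, (1 - lam) • b + lam • a⟫ = (1 - lam) * ⟪g, b⟫ + lam * ⟪g, a⟫ := by
        rw [inner_add_right, real_inner_smul_right, real_inner_smul_right]
      have hdecomp : (1 - lam) • b + lam • a - w = (1 - lam) • (b - w) + lam • (a - w) := by
        module
      have hnorm : ‖(1 - lam) • b + lam • a - w‖ ^ 2
          = (1 - lam) * ‖b - w‖ ^ 2 + lam * ‖a - w‖ ^ 2 - lam * (1 - lam) * ‖b - a‖ ^ 2 := by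
        rw [hdecomp, comb_norm_sq]
        have : b - w - (a - w) = b - a := by abel
        rw [this]
      have hP : P₁ ((1 - lam) • b + lam • a) ≤ (1 - lam) * P₁ b + lam * P₁ a := by
        have := hP₁conv.2 (Set.mem_univ b) (Set.mem_univ a)
          (by linarith : (0:ℝ) ≤ 1 - lam) hlam_pos.le (by ring)
        simpa using this
      rw [hlin, hnorm] at h
      have h2 : lam * (⟪g, b⟫ + L / 2 * ‖b - w‖ ^ 2 + P₁ b
          + L / 2 * (1 - lam) * ‖b - a‖ ^ 2)
          ≤ lam * (⟪g, a⟫ + L / 2 * ‖a - w‖ ^ 2 + P₁ a) := by linarith [h, hP]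
      have h3 := (mul_le_mul_iff_right₀ hlam_pos).mp h2
      have hcl : 1 - lam = c ^ 2 := by rw [hlam]; ring
      rw [hcl] at h3
      linarith
    have hdes := descent_lemma L hL f f' hdiff hlip w b
    have hcvx := grad_convex_le f f' hconv hdiff w a
    have hsub := hξ t b
    rw [← ha] at hsub
    have hnw : ‖a - w‖ ^ 2 ≤ c ^ 2 * ‖a - x t‖ ^ 2 := by
      have haw : a - w = -(β t • (a - x t)) := by
        rw [hw, hy t, ← ha]; module
      rw [haw, norm_neg, norm_smul, Real.norm_eq_abs, abs_of_nonneg (hβ t).1, mul_pow]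
      have hβ2 : (β t) ^ 2 ≤ c ^ 2 := by nlinarith [(hβ t).1, hcβ t]
      nlinarith [norm_nonneg (a - x t), sq_nonneg (‖a - x t‖)]
    -- expand inner products
    set p1 := ⟪f' w, b⟫ with hp1
    set p2 := ⟪f' w, a⟫ with hp2
    set p3 := ⟪f' w, w⟫ with hp3
    set q1 := ⟪ξ t, b⟫ with hq1
    set q2 := ⟪ξ t, a⟫ with hq2
    have e1 : ⟪g, b⟫ = p1 - q1 := by rw [hg, inner_sub_left]
    have e2 : ⟪g, a⟫ = p2 - q2 := by rw [hg, inner_sub_left]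
    have e3 : ⟪f' w, b - w⟫ = p1 - p3 := by rw [inner_sub_right]
    have e4 : ⟪f' w, a - w⟫ = p2 - p3 := by rw [inner_sub_right]
    have e5 : ⟪ξ t, b - a⟫ = q1 - q2 := by rw [inner_sub_right]
    rw [e1, e2] at hsm
    rw [e3] at hdes
    rw [e4] at hcvx
    rw [e5] at hsub
    have hmul := mul_le_mul_of_nonneg_left hnw (by positivity : (0:ℝ) ≤ L / 2)
    linarith
  -- monotonicity gives a uniform bound
  have hnorm0 : ‖x 1 - x 0‖ = 0 := by rw [hinit, sub_self, norm_zero]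
  have mono : ∀ t, f (x (t+1)) + P₁ (x (t+1)) - P₂ (x (t+1))
      + L * c ^ 2 / 2 * ‖x (t+1) - x t‖ ^ 2
      ≤ f (x 1) + P₁ (x 1) - P₂ (x 1) := by
    intro t
    induction t with
    | zero =>
        have e : x (0 + 1) = x 1 := by norm_num
        have e0 : ‖x (0 + 1) - x 0‖ = 0 := by rw [e, hnorm0]
        rw [e0, e]
        norm_num
    | succ k ih => exact le_trans (key k) ih
  have hbound : ∀ m, f (x m) + P₁ (x m) - P₂ (x m) ≤ f (x 1) + P₁ (x 1) - P₂ (x 1) := by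
    intro m
    cases m with
    | zero => rw [hinit]
    | succ k =>
        have := mono k
        have hnn : 0 ≤ L * c ^ 2 / 2 * ‖x (k+1) - x k‖ ^ 2 := by positivity
        linarith
  have hsubset : Set.range x ⊆ {z | f z + P₁ z - P₂ z ≤ f (x 1) + P₁ (x 1) - P₂ (x 1)} := by
    rintro z ⟨m, rfl⟩
    exact hbound m
  exact ((hlevel _).subset hsubset)
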